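/- Let G be a C[θ, θ^{-1}]-module with connection, regular singular at θ = 0, with V-filtration V_θ^•G, and let G₀ be a C[θ^{-1}]-lattice of G. Suppose G'^0 is a V-solution to the Birkhoff problem for G₀, i.e., a free C[θ]-submodule of G stable by θ∂_θ with C[θ,θ^{-1}]·G'^0 = G, and such that for all γ: G₀ ∩ V_θ^γ G = ⊕_{j≥0} θ'^j (G₀ ∩ G'^0 ∩ V_θ^{γ+j}G) where θ' = θ^{-1}. Then for any γ ∈ R, the inclusion (θ' - 1)(G₀ ∩ V_θ^{γ+1}G) ⊆ [(θ'-1)G₀] ∩ (G₀ ∩ V_θ^γ G) is an equality. -/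
import Mathlib


set_option maxHeartbeats 1000000 in
/-- Let `G` be a regular singular `ℂ[θ,θ⁻¹]`-module with connection
(`θ` acting as a `ℂ`-linear automorphism), with decreasing exhaustive V-filtration
`V^•G` (indexed by `ℝ`, with `θ·V^γ = V^{γ+1}`), and let `G₀` be a `ℂ[θ']`-lattice
(`θ' = θ⁻¹`).  Let `G'⁰` be a V-solution to the Birkhoff problem for `G₀`: a
`θ`-stable, `θ∂_θ`-stable submodule generating `G` over `ℂ[θ,θ⁻¹]` such that for all
`γ`, `G₀ ∩ V^γ G = ⊕_{j≥0} θ'^j (G₀ ∩ G'⁰ ∩ V^{γ+j}G)`.  Then for every `γ ∈ ℝ`,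
`(θ' - 1)(G₀ ∩ V^{γ+1}G) = [(θ'-1)G₀] ∩ (G₀ ∩ V^γ G)`. -/
theorem stmt_9 {G : Type*} [AddCommGroup G] [Module ℂ G]
    (θ : G ≃ₗ[ℂ] G) (Dθ : G →ₗ[ℂ] G) (V : ℝ → Submodule ℂ G)
    (hVdec : ∀ γ γ' : ℝ, γ ≤ γ' → V γ' ≤ V γ)
    (hVθ : ∀ γ : ℝ, Submodule.map (θ : G →ₗ[ℂ] G) (V γ) = V (γ + 1))
    (G₀ Gp0 : Submodule ℂ G)
    (hG₀θ' : ∀ x ∈ G₀, θ.symm x ∈ G₀)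
    (hlattice : ∀ x : G, ∃ n : ℕ, ((θ.symm : G →ₗ[ℂ] G) ^ n) x ∈ G₀)
    (hexh : ∀ (γ : ℝ) (x : G), x ∈ G₀ → ∃ ℓ : ℕ, x ∈ V (γ - ℓ))
    (hvanish : ∃ Γ : ℝ, ∀ γ : ℝ, Γ ≤ γ → G₀ ⊓ V γ = ⊥)
    (hGp0θ : ∀ x ∈ Gp0, θ x ∈ Gp0)
    (hGp0D : ∀ x ∈ Gp0, Dθ x ∈ Gp0)
    (hGp0full : ∀ x : G, x ∈ ⨆ n : ℤ,
      Submodule.map ((θ ^ n : G ≃ₗ[ℂ] G) : G →ₗ[ℂ] G) Gp0)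
    (hsol : ∀ γ : ℝ, G₀ ⊓ V γ =
      ⨆ j : ℕ, Submodule.map ((θ.symm : G →ₗ[ℂ] G) ^ j) (G₀ ⊓ Gp0 ⊓ V (γ + j)))
    (hindep : ∀ (γ : ℝ) (j : ℕ),
      Disjoint (Submodule.map ((θ.symm : G →ₗ[ℂ] G) ^ j) (G₀ ⊓ Gp0 ⊓ V (γ + j)))
        (⨆ j' : ℕ, ⨆ _ : j' ≠ j,
          Submodule.map ((θ.symm : G →ₗ[ℂ] G) ^ j') (G₀ ⊓ Gp0 ⊓ V (γ + j')))) :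
    ∀ γ : ℝ,
      Submodule.map ((θ.symm : G →ₗ[ℂ] G) - LinearMap.id) (G₀ ⊓ V (γ + 1))
        = Submodule.map ((θ.symm : G →ₗ[ℂ] G) - LinearMap.id) G₀ ⊓ (G₀ ⊓ V γ) := by
  classical
  have tV : ∀ (β : ℝ) (x : G), x ∈ V (β + 1) → θ.symm x ∈ V β := by
    intro β x hx
    rw [← hVθ β] at hx
    obtain ⟨z, hz, hzx⟩ := hx
    have hx' : θ.symm x = z := by rw [← hzx]; exact θ.symm_apply_apply z
    rwa [hx']
  set t : G →ₗ[ℂ] G := (θ.symm : G →ₗ[ℂ] G) with ht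
  have hpow : ∀ (j : ℕ) (p : Submodule ℂ G),
      Submodule.map (t ^ (j + 1)) p = Submodule.map t (Submodule.map (t ^ j) p) := by
    intro j p
    rw [pow_succ', Module.End.mul_eq_comp, Submodule.map_comp]
  have hsucc : ∀ (β : ℝ) (j : ℕ),
      Submodule.map (t ^ (j + 1)) (G₀ ⊓ Gp0 ⊓ V (β + ((j : ℕ) + 1 : ℕ)))
        = Submodule.map t (Submodule.map (t ^ j) (G₀ ⊓ Gp0 ⊓ V (β + 1 + j))) := by
    intro β j
    rw [hpow]
    congr 3
    push_cast
    ring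
  have h0 : ∀ β : ℝ, Submodule.map (t ^ (0 : ℕ)) (G₀ ⊓ Gp0 ⊓ V (β + ((0 : ℕ) : ℝ)))
      = G₀ ⊓ Gp0 ⊓ V β := by
    intro β
    simp [Module.End.one_eq_id, Submodule.map_id]
  have hA : ∀ β : ℝ, G₀ ⊓ V β
      = (G₀ ⊓ Gp0 ⊓ V β) ⊔ Submodule.map t (G₀ ⊓ V (β + 1)) := by
    intro β
    rw [hsol β, hsol (β + 1), Submodule.map_iSup]
    apply le_antisymm
    · refine iSup_le fun j => ?_
      cases j with
      | zero => rw [h0 β]; exact le_sup_left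
      | succ n =>
        rw [hsucc β n]
        exact le_sup_of_le_right
          (le_iSup (fun j : ℕ => Submodule.map t (Submodule.map (t ^ j) (G₀ ⊓ Gp0 ⊓ V (β + 1 + (j : ℝ))))) n)
    · refine sup_le ?_ ?_
      · rw [← h0 β]
        exact le_iSup (fun j : ℕ => Submodule.map (t ^ j) (G₀ ⊓ Gp0 ⊓ V (β + (j : ℝ)))) 0
      · refine iSup_le fun j => ?_
        rw [← hsucc β j]
        exact le_iSup (fun j : ℕ => Submodule.map (t ^ j) (G₀ ⊓ Gp0 ⊓ V (β + (j : ℝ)))) (j + 1)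
  have hB : ∀ β : ℝ, Disjoint (G₀ ⊓ Gp0 ⊓ V β) (Submodule.map t (G₀ ⊓ V (β + 1))) := by
    intro β
    have h := hindep β 0
    rw [h0 β] at h
    refine h.mono_right ?_
    rw [hsol (β + 1), Submodule.map_iSup]
    refine iSup_le fun j => ?_
    rw [← hsucc β j]
    exact le_iSup_of_le (j + 1) (le_iSup_of_le (Nat.succ_ne_zero j) le_rfl)
  have key : ∀ (β : ℝ) (x : G), x ∈ G₀ → x ∈ V β →
      θ.symm x - x ∈ G₀ → θ.symm x - x ∈ V β → x ∈ V (β + 1) := by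
    intro β x hxG hxV hyG hyV
    have hθx : θ.symm x ∈ G₀ ⊓ V β := by
      refine Submodule.mem_inf.mpr ⟨hG₀θ' x hxG, ?_⟩
      have : θ.symm x = (θ.symm x - x) + x := by abel
      rw [this]
      exact add_mem hyV hxV
    rw [hA β] at hθx
    obtain ⟨w, hw, z, hz, hwz⟩ := Submodule.mem_sup.mp hθx
    obtain ⟨u, hu, rfl⟩ := hz
    have huG : u ∈ G₀ := (Submodule.mem_inf.mp hu).1
    have huV : u ∈ V (β + 1) := (Submodule.mem_inf.mp hu).2
    have hxu : x - u ∈ G₀ ⊓ V (β - 1 + 1) := by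
      refine Submodule.mem_inf.mpr ⟨sub_mem hxG huG, ?_⟩
      have : (β : ℝ) - 1 + 1 = β := by ring
      rw [this]
      exact sub_mem hxV (hVdec β (β + 1) (by linarith) huV)
    have hw' : w = t (x - u) := by
      have htx : t x = θ.symm x := rfl
      rw [map_sub, htx]
      have : t u = θ.symm x - w := by
        rw [← hwz]; abel
      rw [this]
      abel
    have hwmem : w ∈ Submodule.map t (G₀ ⊓ V (β - 1 + 1)) := by
      rw [hw']
      exact Submodule.mem_map_of_mem hxu
    have hwW : w ∈ G₀ ⊓ Gp0 ⊓ V (β - 1) := by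
      refine Submodule.mem_inf.mpr ⟨(Submodule.mem_inf.mp hw).1, ?_⟩
      exact hVdec (β - 1) β (by linarith) (Submodule.mem_inf.mp hw).2
    have hw0 : w = 0 := (Submodule.disjoint_def.mp (hB (β - 1))) w hwW hwmem
    have hux : u = x := by
      apply θ.symm.injective
      have : t u = θ.symm u := rfl
      rw [← this, ← hwz, hw0, zero_add]
    rwa [← hux]
  intro γ
  have happ : ∀ x : G, (t - LinearMap.id : G →ₗ[ℂ] G) x = θ.symm x - x := by
    intro x
    rw [LinearMap.sub_apply, LinearMap.id_apply]
    rfl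
  apply le_antisymm
  · rintro y ⟨x, hx, rfl⟩
    have hxG : x ∈ G₀ := (Submodule.mem_inf.mp hx).1
    have hxV : x ∈ V (γ + 1) := (Submodule.mem_inf.mp hx).2
    refine Submodule.mem_inf.mpr ⟨⟨x, hxG, rfl⟩, Submodule.mem_inf.mpr ⟨?_, ?_⟩⟩
    · rw [happ]
      exact sub_mem (hG₀θ' x hxG) hxG
    · rw [happ]
      exact sub_mem (tV γ x hxV) (hVdec γ (γ + 1) (by linarith) hxV)
  · rintro y ⟨⟨x, hxG, rfl⟩, hy⟩
    have hyG : (t - LinearMap.id : G →ₗ[ℂ] G) x ∈ G₀ := (Submodule.mem_inf.mp hy).1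
    have hyV : (t - LinearMap.id : G →ₗ[ℂ] G) x ∈ V γ := (Submodule.mem_inf.mp hy).2
    obtain ⟨ℓ, hℓ⟩ := hexh (γ + 1) x hxG
    have main : ∀ (n : ℕ) (x : G), x ∈ G₀ → x ∈ V (γ + 1 - n) →
        θ.symm x - x ∈ G₀ → θ.symm x - x ∈ V γ → x ∈ V (γ + 1) := by
      intro n
      induction n with
      | zero => intro x _ hx _ _; simpa using hx
      | succ m ih =>
        intro x hxG hxV hyG hyV
        have hle : γ + 1 - ((m : ℝ) + 1) ≤ γ := by
          have : (0 : ℝ) ≤ m := Nat.cast_nonneg m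
          linarith
        have hxV' : x ∈ V (γ + 1 - ((m : ℕ) + 1 : ℕ)) := hxV
        have hcast : ((((m : ℕ) + 1 : ℕ)) : ℝ) = (m : ℝ) + 1 := by push_cast; ring
        rw [hcast] at hxV'
        have hk := key (γ + 1 - ((m : ℝ) + 1)) x hxG hxV' hyG
          (hVdec (γ + 1 - ((m : ℝ) + 1)) γ hle hyV)
        have harith : γ + 1 - ((m : ℝ) + 1) + 1 = γ + 1 - m := by ring
        rw [harith] at hk
        exact ih x hxG hk hyG hyV
    refine ⟨x, ?_, rfl⟩
    refine Submodule.mem_inf.mpr ⟨hxG, ?_⟩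
    exact main ℓ x hxG hℓ (by rw [← happ]; exact hyG) (by rw [← happ]; exact hyV)
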